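/- Let p, q be integers with p, q ≥ 3, q even, and 1/p + 1/q ≤ 1/2, and set N = (q−2)/2. Define σ : ℕ → ℤ by σ_0 = 1, σ_1 = p, and for n ≥ 1: σ_{n+1} = σ_1 + (p−2)·Σ_{l=0}^{n−1} σ_{n−l} if n < N; σ_{N+1} = (p−2)·Σ_{l=0}^{N−1} σ_{N−l}; σ_{n+1} = −σ_{n−N} + (p−2)·Σ_{l=0}^{N−1} σ_{n−l} if n > N. Then in the ring of formal power series ℤ[[z]], g_{p,q}(z)·(Σ_{n=0}^∞ σ_n z^n) = h_{p,q}(z), where g_{p,q}(z) = 1 − (p−2)z − (p−2)z² − ⋯ − (p−2)z^N + z^{N+1} and h_{p,q}(z) = 1 + 2z + 2z² + ⋯ + 2z^N + z^{N+1}. -/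
import Mathlib


/-- for `q` even, `N = (q-2)/2`, the sphere-cardinality sequence of the
`(p,q)`-regular tessellation (defined by the growth recursion of the paper's Theorem 2 with
all coefficients equal to `p - 2`) has growth series satisfying
`g_{p,q}(z)·(Σ σ_n z^n) = h_{p,q}(z)` in `ℤ[[z]]`, where
`g_{p,q} = 1 - (p-2)(z + ⋯ + z^N) + z^(N+1)` and `h_{p,q} = 1 + 2z + ⋯ + 2z^N + z^(N+1)`. -/
theorem growth_series_even (p q : ℕ) (hp : 3 ≤ p) (hq : 3 ≤ q) (hqe : Even q)
    (hpq : (1 : ℝ) / p + 1 / q ≤ 1 / 2)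
    (N : ℕ) (hN : N = (q - 2) / 2)
    (σ : ℕ → ℤ) (hσ0 : σ 0 = 1) (hσ1 : σ 1 = p)
    (hrec1 : ∀ n, 1 ≤ n → n < N →
      σ (n + 1) = σ 1 + ((p : ℤ) - 2) * ∑ l ∈ Finset.range n, σ (n - l))
    (hrec2 : 1 ≤ N → σ (N + 1) = ((p : ℤ) - 2) * ∑ l ∈ Finset.range N, σ (N - l))
    (hrec3 : ∀ n, N < n →
      σ (n + 1) = -σ (n - N) + ((p : ℤ) - 2) * ∑ l ∈ Finset.range N, σ (n - l)) :
    (PowerSeries.mk fun k =>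
        if k = 0 ∨ k = N + 1 then (1 : ℤ) else if k ≤ N then -((p : ℤ) - 2) else 0) *
      (PowerSeries.mk fun n => σ n) =
    (PowerSeries.mk fun k =>
        if k = 0 ∨ k = N + 1 then (1 : ℤ) else if k ≤ N then 2 else 0) := by
  have hN1 : 1 ≤ N := by obtain ⟨t, ht⟩ := hqe; omega
  ext m
  rw [PowerSeries.coeff_mul, Finset.Nat.sum_antidiagonal_eq_sum_range_succ_mk]
  simp only [PowerSeries.coeff_mk]
  rcases Nat.lt_or_ge m 1 with hm | hm
  · interval_cases m
    simp [hσ0]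
  rcases Nat.lt_or_ge m (N + 1) with hmN | hmN
  · -- 1 ≤ m ≤ N
    have hrhs : (if m = 0 ∨ m = N + 1 then (1:ℤ) else if m ≤ N then 2 else 0) = 2 := by
      rw [if_neg (by omega), if_pos (by omega)]
    rw [hrhs, Finset.sum_range_succ']
    have h0 : (if (0:ℕ) = 0 ∨ 0 = N + 1 then (1:ℤ) else if 0 ≤ N then -((p:ℤ)-2) else 0) * σ (m - 0)
        = σ m := by simp
    rw [h0]
    have hterms : ∀ k ∈ Finset.range m,
        (if k + 1 = 0 ∨ k + 1 = N + 1 then (1:ℤ) else if k + 1 ≤ N then -((p:ℤ)-2) else 0) * σ (m - (k+1))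
        = -((p:ℤ)-2) * σ (m - 1 - k) := by
      intro k hk
      simp only [Finset.mem_range] at hk
      rw [if_neg (by omega), if_pos (by omega)]
      congr 2
      omega
    rw [Finset.sum_congr rfl hterms, ← Finset.mul_sum]
    rcases Nat.lt_or_ge m 2 with hm2 | hm2
    · interval_cases m
      simp [hσ0, hσ1]
    · have := hrec1 (m - 1) (by omega) (by omega)
      rw [show m - 1 + 1 = m by omega] at this
      rw [this, hσ1]
      have hm1 : m = (m - 1) + 1 := by omega
      rw [show Finset.range m = Finset.range ((m-1)+1) from by rw [← hm1],
        Finset.sum_range_succ]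
      rw [show m - 1 - (m - 1) = 0 by omega, hσ0]
      ring
  · -- m ≥ N + 1
    have hzero : ∀ k ∈ Finset.range (m + 1), k ∉ Finset.range (N + 2) →
        (if k = 0 ∨ k = N + 1 then (1:ℤ) else if k ≤ N then -((p:ℤ)-2) else 0) * σ (m - k) = 0 := by
      intro k _ hk
      simp only [Finset.mem_range] at hk
      rw [if_neg (by omega), if_neg (by omega), zero_mul]
    rw [← Finset.sum_subset (Finset.range_subset_range.mpr (by omega)) hzero]
    rw [Finset.sum_range_succ, Finset.sum_range_succ']
    have hlast : (if N + 1 = 0 ∨ N + 1 = N + 1 then (1:ℤ) else if N + 1 ≤ N then -((p:ℤ)-2) else 0)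
        * σ (m - (N+1)) = σ (m - (N+1)) := by simp
    have h0 : (if (0:ℕ) = 0 ∨ 0 = N + 1 then (1:ℤ) else if 0 ≤ N then -((p:ℤ)-2) else 0) * σ (m - 0)
        = σ m := by simp
    rw [hlast, h0]
    have hterms : ∀ k ∈ Finset.range N,
        (if k + 1 = 0 ∨ k + 1 = N + 1 then (1:ℤ) else if k + 1 ≤ N then -((p:ℤ)-2) else 0) * σ (m - (k+1))
        = -((p:ℤ)-2) * σ (m - 1 - k) := by
      intro k hk
      simp only [Finset.mem_range] at hk
      rw [if_neg (by omega), if_pos (by omega)]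
      congr 2
      omega
    rw [Finset.sum_congr rfl hterms, ← Finset.mul_sum]
    rcases eq_or_lt_of_le hmN with hme | hmg
    · -- m = N + 1
      subst hme
      rw [if_pos (Or.inr rfl), show N + 1 - (N + 1) = 0 from by omega, hσ0, hrec2 hN1]
      have hc : ∀ k ∈ Finset.range N, σ (N + 1 - 1 - k) = σ (N - k) := by
        intro k hk; congr 1
      rw [Finset.sum_congr rfl hc]
      ring
    · -- m > N + 1
      have h3 := hrec3 (m - 1) (by omega)
      rw [show m - 1 + 1 = m by omega] at h3
      rw [if_neg (by omega), if_neg (by omega), h3,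
        show m - 1 - N = m - (N + 1) by omega]
      ring
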